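/- For $-7/4 < s \leq 0$, the bilinear operator $B_2(u,v)_k = \sum_{k_1+k_2=k,\,k_1,k_2\neq0} \frac{e^{i3kk_1k_2t}}{k_1k_2} u_{k_1}v_{k_2}$ maps $\dot H^0 \times \dot H^s$ into $\dot H^s$ with $\|B_2(u,v)\|_{\dot H^s} \leq c_2''(s) \|u\|_{\dot H^0}\|v\|_{\dot H^s}$ for a finite constant $c_2''(s)$. -/
import Mathlib


open Complex
open scoped ENNReal NNReal

noncomputable def hnorm (s : ℝ) (u : ℤ → ℂ) : ℝ :=
  (∑' k : ℤ, |(k : ℝ)| ^ (2 * s) * ‖u k‖ ^ 2) ^ ((1 : ℝ) / 2)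

noncomputable def B2 (t : ℝ) (u v : ℤ → ℂ) (k : ℤ) : ℂ :=
  ∑' k1 : ℤ, Complex.exp (Complex.I * (3 * (k : ℂ) * (k1 : ℂ) * ((k : ℂ) - (k1 : ℂ)) * (t : ℂ)))
      / ((k1 : ℂ) * ((k : ℂ) - (k1 : ℂ))) * u k1 * v (k - k1)

open MeasureTheory ENNReal in
lemma tsum_CS_aux (G H : ℤ → ℝ≥0∞) :
    (∑' k, G k * H k) ≤ (∑' k, (G k)^2) ^ ((1:ℝ)/2) * (∑' k, (H k)^2) ^ ((1:ℝ)/2) := by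
  have h2 : Real.HolderConjugate 2 2 := by constructor <;> norm_num
  have h := ENNReal.lintegral_mul_le_Lp_mul_Lq (Measure.count : Measure ℤ) h2
    (f := G) (g := H) (Measurable.aemeasurable (by measurability))
    (Measurable.aemeasurable (by measurability))
  simp only [lintegral_count, Pi.mul_apply] at h
  have e1 : ∀ (F : ℤ → ℝ≥0∞), ∑' k, F k ^ (2:ℝ) = ∑' k, F k ^ 2 := by
    intro F
    refine tsum_congr fun k => ?_
    rw [← ENNReal.rpow_natCast (F k) 2]
    norm_num
  rw [e1, e1] at h
  exact h

lemma tsum_CS_sq (G H : ℤ → ℝ≥0∞) :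
    (∑' k, G k * H k)^2 ≤ (∑' k, (G k)^2) * (∑' k, (H k)^2) := by
  have h := tsum_CS_aux G H
  have h2 := pow_le_pow_left' h 2
  calc (∑' k, G k * H k)^2
      ≤ ((∑' k, (G k)^2) ^ ((1:ℝ)/2) * (∑' k, (H k)^2) ^ ((1:ℝ)/2))^2 := h2
    _ = (∑' k, (G k)^2) * (∑' k, (H k)^2) := by
        rw [mul_pow, ← ENNReal.rpow_natCast ((∑' k, (G k)^2) ^ ((1:ℝ)/2)) 2,
          ← ENNReal.rpow_natCast ((∑' k, (H k)^2) ^ ((1:ℝ)/2)) 2,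
          ← ENNReal.rpow_mul, ← ENNReal.rpow_mul]
        norm_num

lemma cs_helper (q x w z : ℝ) (hx : 1 ≤ x) (hw : 1 ≤ w) (hz : 1 ≤ z)
    (hq0 : 0 ≤ q) (hq2 : q ≤ 2) (h : w ≤ 2 * x * z) :
    x ^ (-q) * w ^ q ≤ 4 * z ^ (2:ℝ) := by
  have hx0 : (0:ℝ) < x := by linarith
  have hz0 : (0:ℝ) < z := by linarith
  have h1 : w ^ q ≤ (2 * x * z) ^ q :=
    Real.rpow_le_rpow (by linarith) h hq0
  have h2 : (2 * x * z) ^ q = 2 ^ q * x ^ q * z ^ q := by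
    rw [Real.mul_rpow (by positivity) (le_of_lt hz0), Real.mul_rpow (by norm_num) (le_of_lt hx0)]
  have h3 : x ^ (-q) * x ^ q = 1 := by
    rw [← Real.rpow_add hx0]; simp
  have h4 : (2:ℝ) ^ q ≤ 2 ^ (2:ℝ) := Real.rpow_le_rpow_of_exponent_le (by norm_num) hq2
  have h5 : z ^ q ≤ z ^ (2:ℝ) := Real.rpow_le_rpow_of_exponent_le hz hq2
  have hxq : (0:ℝ) < x ^ (-q) := Real.rpow_pos_of_pos hx0 _
  calc x ^ (-q) * w ^ q ≤ x ^ (-q) * (2 ^ q * x ^ q * z ^ q) := by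
        rw [← h2]; exact mul_le_mul_of_nonneg_left h1 (le_of_lt hxq)
    _ = (x ^ (-q) * x ^ q) * (2 ^ q * z ^ q) := by ring
    _ = 2 ^ q * z ^ q := by rw [h3, one_mul]
    _ ≤ 4 * z ^ (2:ℝ) := by
        have h24 : (2:ℝ) ^ (2:ℝ) = 4 := by
          rw [show (2:ℝ) = ((2:ℕ):ℝ) by norm_num, Real.rpow_natCast]; norm_num
        have hzq : (0:ℝ) < z ^ q := Real.rpow_pos_of_pos hz0 _
        nlinarith [Real.rpow_pos_of_pos hz0 (2:ℝ)]

lemma rpow_two' (x : ℝ) : x ^ (2:ℝ) = x ^ 2 := by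
  rw [show (2:ℝ) = ((2:ℕ):ℝ) by norm_num, Real.rpow_natCast]

lemma rpow_sq' (x : ℝ) (hx : 0 ≤ x) (s : ℝ) : (x ^ s) ^ 2 = x ^ (2 * s) := by
  rw [← Real.rpow_natCast (x ^ s) 2, ← Real.rpow_mul hx]
  norm_num [mul_comm]

lemma cs_key (r x y z : ℝ) (hx : 1 ≤ x) (hy : 1 ≤ y) (hz : 1 ≤ z)
    (hr1 : -2 ≤ r) (hr2 : r ≤ 2) (h1 : x ≤ 2 * y * z) (h2 : y ≤ 2 * x * z) :
    x ^ r * y ^ (-r) ≤ 4 * z ^ (2:ℝ) := by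
  rcases le_or_gt 0 r with h | h
  · have := cs_helper r y x z hy hx hz h hr2 h1
    linarith [this, mul_comm (y ^ (-r)) (x ^ r)]
  · have := cs_helper (-r) x y z hx hy hz (by linarith) (by linarith) h2
    rw [neg_neg] at this
    linarith

lemma kernel_bound (s : ℝ) (hs1 : -(7/4) < s) (hs2 : s ≤ 0) (k k1 : ℤ) (hk1 : k1 ≠ 0) :
    (|(k:ℝ)| ^ s * |(k:ℝ) - (k1:ℝ)| ^ (-s) / (|(k1:ℝ)| * |(k:ℝ) - (k1:ℝ)|)) ^ 2
      ≤ 4 / (k:ℝ) ^ 2 + (if k = 0 then 1 else 0) := by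
  have hz : (1:ℝ) ≤ |(k1:ℝ)| := by
    rw [← Int.cast_abs]; exact_mod_cast Int.one_le_abs hk1
  by_cases hk : k = 0
  · subst hk
    rw [if_pos rfl]
    have e0 : ((0:ℤ):ℝ) = 0 := by norm_num
    rw [e0]
    rcases eq_or_lt_of_le hs2 with hs | hs
    · subst hs
      simp only [neg_zero, Real.rpow_zero, zero_sub, abs_neg, one_mul]
      have hzz : (1:ℝ) ≤ |(k1:ℝ)| * |(k1:ℝ)| := by nlinarith
      have e4 : (4:ℝ) / (0:ℝ) ^ 2 = 0 := by norm_num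
      rw [e4, zero_add, div_pow, one_pow, div_le_one (by nlinarith)]
      nlinarith
    · have e5 : |(0:ℝ)| ^ s = 0 := by rw [abs_zero, Real.zero_rpow (ne_of_lt hs)]
      rw [e5, zero_mul, zero_div, zero_pow two_ne_zero]
      positivity
  · rw [if_neg hk, add_zero]
    by_cases hkk : k = k1
    · subst hkk
      rw [sub_self, abs_zero, mul_zero, div_zero, zero_pow two_ne_zero]
      positivity
    · set x := |(k:ℝ)| with hxdef
      set y := |(k:ℝ) - (k1:ℝ)| with hydef
      set z := |(k1:ℝ)| with hzdef
      have hx : (1:ℝ) ≤ x := by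
        rw [hxdef, ← Int.cast_abs]; exact_mod_cast Int.one_le_abs hk
      have hy : (1:ℝ) ≤ y := by
        rw [hydef, show (k:ℝ) - (k1:ℝ) = ((k - k1 : ℤ) : ℝ) by push_cast; ring, ← Int.cast_abs]
        exact_mod_cast Int.one_le_abs (sub_ne_zero.mpr hkk)
      have hx0 : (0:ℝ) < x := by linarith
      have hy0 : (0:ℝ) < y := by linarith
      have hz0 : (0:ℝ) < z := by linarith
      have h1 : x ≤ 2 * y * z := by
        have h1a : x ≤ y + z := by
          have := abs_add_le ((k:ℝ) - (k1:ℝ)) ((k1:ℝ))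
          simpa using this
        nlinarith
      have h2 : y ≤ 2 * x * z := by
        have h2a : y ≤ x + z := by
          have := abs_sub (k:ℝ) (k1:ℝ)
          simpa using this
        nlinarith
      have hkey := cs_key (2*s + 2) x y z hx hy hz (by linarith) (by linarith) h1 h2
      have e1 : x ^ (2*s + 2) = x ^ (2*s) * x ^ 2 := by
        rw [Real.rpow_add hx0, rpow_two']
      have e2 : y ^ (-(2*s + 2)) * y ^ 2 = y ^ (-(2*s)) := by
        rw [← rpow_two', ← Real.rpow_add hy0]; ring_nf
      have hkey2 : x ^ (2*s) * y ^ (-(2*s)) * x ^ 2 ≤ 4 * (z ^ 2 * y ^ 2) := by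
        have hmul := mul_le_mul_of_nonneg_right hkey (sq_nonneg y)
        calc x ^ (2*s) * y ^ (-(2*s)) * x ^ 2
            = (x ^ (2*s + 2)) * (y ^ (-(2*s + 2)) * y ^ 2) := by rw [e1, e2]; ring
          _ = x ^ (2*s + 2) * y ^ (-(2*s + 2)) * y ^ 2 := by ring
          _ ≤ 4 * z ^ (2:ℝ) * y ^ 2 := hmul
          _ = 4 * (z ^ 2 * y ^ 2) := by rw [rpow_two']; ring
      have lhs_eq : (x ^ s * y ^ (-s) / (z * y)) ^ 2 = x ^ (2*s) * y ^ (-(2*s)) / (z^2 * y^2) := by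
        rw [div_pow, mul_pow, mul_pow, ← Real.rpow_natCast (x ^ s) 2,
          ← Real.rpow_natCast (y ^ (-s)) 2, ← Real.rpow_mul (le_of_lt hx0),
          ← Real.rpow_mul (le_of_lt hy0)]
        norm_num
        ring_nf
      rw [lhs_eq, div_le_div_iff₀ (by positivity) (by positivity)]
      have hk2 : (k:ℝ) ^ 2 = x ^ 2 := (_root_.sq_abs ((k:ℝ))).symm
      rw [hk2]
      linarith

lemma term_norm (t : ℝ) (u v : ℤ → ℂ) (k k1 : ℤ) :
    ‖Complex.exp (Complex.I * (3 * (k : ℂ) * (k1 : ℂ) * ((k : ℂ) - (k1 : ℂ)) * (t : ℂ)))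
      / ((k1 : ℂ) * ((k : ℂ) - (k1 : ℂ))) * u k1 * v (k - k1)‖
    = ‖u k1‖ * ‖v (k - k1)‖ / (|(k1:ℝ)| * |(k:ℝ) - (k1:ℝ)|) := by
  rw [norm_mul, norm_mul, norm_div, norm_mul]
  have he : ‖Complex.exp (Complex.I * (3 * (k : ℂ) * (k1 : ℂ) * ((k : ℂ) - (k1 : ℂ)) * (t : ℂ)))‖
      = 1 := by
    have e : Complex.I * (3 * (k : ℂ) * (k1 : ℂ) * ((k : ℂ) - (k1 : ℂ)) * (t : ℂ))
        = ((3 * (k:ℝ) * (k1:ℝ) * ((k:ℝ) - (k1:ℝ)) * t : ℝ) : ℂ) * Complex.I := by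
      push_cast; ring
    rw [e, Complex.norm_exp_ofReal_mul_I]
  have h1 : ‖((k1:ℤ):ℂ)‖ = |(k1:ℝ)| := by
    rw [show ((k1:ℤ):ℂ) = (((k1:ℝ)):ℂ) by push_cast; ring, Complex.norm_real, Real.norm_eq_abs]
  have h2 : ‖(k:ℂ) - (k1:ℂ)‖ = |(k:ℝ) - (k1:ℝ)| := by
    rw [show (k:ℂ) - (k1:ℂ) = (((k:ℝ) - (k1:ℝ) : ℝ):ℂ) by push_cast; ring, Complex.norm_real,
      Real.norm_eq_abs]
  rw [he, h1, h2]
  ring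

lemma norm_tsum_le' (f : ℤ → ℂ) : ‖∑' k, f k‖ ≤ ∑' k, ‖f k‖ := by
  by_cases h : Summable fun k => ‖f k‖
  · exact norm_tsum_le_tsum_norm h
  · rw [tsum_eq_zero_of_not_summable (fun hs => h (summable_norm_iff.mpr hs)), norm_zero]
    exact tsum_nonneg fun k => norm_nonneg _

lemma ofReal_norm_tsum_le (f : ℤ → ℂ) :
    ENNReal.ofReal ‖∑' k, f k‖ ≤ ∑' k, ENNReal.ofReal ‖f k‖ := by
  by_cases h : Summable fun k => ‖f k‖
  · calc ENNReal.ofReal ‖∑' k, f k‖ ≤ ENNReal.ofReal (∑' k, ‖f k‖) :=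
        ENNReal.ofReal_le_ofReal (norm_tsum_le' f)
    _ = ∑' k, ENNReal.ofReal ‖f k‖ := ENNReal.ofReal_tsum_of_nonneg (fun _ => norm_nonneg _) h
  · rw [tsum_eq_zero_of_not_summable (fun hs => h (summable_norm_iff.mpr hs)), norm_zero]
    simp

lemma step_pt (s : ℝ) (u v : ℤ → ℂ) (hv0 : v 0 = 0) (k k1 : ℤ) :
    |(k:ℝ)| ^ s * (‖u k1‖ * ‖v (k - k1)‖ / (|(k1:ℝ)| * |(k:ℝ) - (k1:ℝ)|))
      = (|(k:ℝ)| ^ s * |(k:ℝ) - (k1:ℝ)| ^ (-s) / (|(k1:ℝ)| * |(k:ℝ) - (k1:ℝ)|)) * ‖u k1‖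
        * (|((k - k1 : ℤ):ℝ)| ^ s * ‖v (k - k1)‖) := by
  by_cases hkk : k = k1
  · subst hkk
    rw [sub_self, hv0, norm_zero]
    simp
  · have hcast : ((k - k1 : ℤ):ℝ) = (k:ℝ) - (k1:ℝ) := by push_cast; ring
    have hy0 : (0:ℝ) < |(k:ℝ) - (k1:ℝ)| := by
      rw [show (k:ℝ) - (k1:ℝ) = ((k - k1 : ℤ) : ℝ) by push_cast; ring]
      rw [← Int.cast_abs]
      exact_mod_cast Int.one_le_abs (sub_ne_zero.mpr hkk)
    have hcan : |(k:ℝ) - (k1:ℝ)| ^ (-s) * |(k:ℝ) - (k1:ℝ)| ^ s = 1 := by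
      rw [← Real.rpow_add hy0]; simp
    rw [hcast]
    have hr : (|(k:ℝ)| ^ s * |(k:ℝ) - (k1:ℝ)| ^ (-s) / (|(k1:ℝ)| * |(k:ℝ) - (k1:ℝ)|)) * ‖u k1‖
        * (|(k:ℝ) - (k1:ℝ)| ^ s * ‖v (k - k1)‖)
        = |(k:ℝ)| ^ s * (‖u k1‖ * ‖v (k - k1)‖ / (|(k1:ℝ)| * |(k:ℝ) - (k1:ℝ)|))
          * (|(k:ℝ) - (k1:ℝ)| ^ (-s) * |(k:ℝ) - (k1:ℝ)| ^ s) := by ring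
    rw [hr, hcan, mul_one]

theorem B2_mixed_bound (s : ℝ) (hs1 : -(7 / 4) < s) (hs2 : s ≤ 0) :
    ∃ C : ℝ, ∀ (t : ℝ) (u v : ℤ → ℂ), u 0 = 0 → v 0 = 0 →
      (Summable fun k : ℤ => ‖u k‖ ^ 2) →
      (Summable fun k : ℤ => |(k : ℝ)| ^ (2 * s) * ‖v k‖ ^ 2) →
      hnorm s (B2 t u v) ≤ C * hnorm 0 u * hnorm s v := by
  classical
  set κ : ℤ → ℝ := fun k => 4 / (k:ℝ)^2 + (if k = 0 then 1 else 0) with hκdef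
  have hκnn : ∀ k, 0 ≤ κ k := by
    intro k
    apply add_nonneg (by positivity)
    split <;> norm_num
  have hκsum : Summable κ := by
    apply Summable.add
    · have h0 := (Real.summable_one_div_int_pow (p := 2)).mpr (by norm_num)
      refine (h0.mul_left (4:ℝ)).congr fun k => ?_
      field_simp
    · apply summable_of_ne_finset_zero (s := ({0} : Finset ℤ))
      intro b hb
      simp only [Finset.mem_singleton] at hb
      simp [hb]
  set M := ∑' k : ℤ, κ k with hMdef
  have hM0 : 0 ≤ M := tsum_nonneg hκnn
  refine ⟨M ^ ((1:ℝ)/2), ?_⟩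
  intro t u v hu0 hv0 hU hV
  set U := ∑' k : ℤ, ‖u k‖^2 with hUdef
  set V := ∑' k : ℤ, |(k:ℝ)|^(2*s) * ‖v k‖^2 with hVdef
  have hU0 : 0 ≤ U := tsum_nonneg fun k => sq_nonneg _
  have hV0 : 0 ≤ V := tsum_nonneg fun k => by positivity
  -- ENNReal quantities
  set G : ℤ → ℤ → ℝ≥0∞ := fun k k1 => ENNReal.ofReal
    ((|(k:ℝ)| ^ s * |(k:ℝ) - (k1:ℝ)| ^ (-s) / (|(k1:ℝ)| * |(k:ℝ) - (k1:ℝ)|)) * ‖u k1‖) with hGdef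
  set H : ℤ → ℤ → ℝ≥0∞ := fun k k1 =>
    ENNReal.ofReal (|((k - k1 : ℤ):ℝ)| ^ s * ‖v (k - k1)‖) with hHdef
  set Ue := ∑' k : ℤ, ENNReal.ofReal (‖u k‖^2) with hUedef
  set Ve := ∑' k : ℤ, ENNReal.ofReal (|(k:ℝ)|^(2*s) * ‖v k‖^2) with hVedef
  have hUeq : Ue = ENNReal.ofReal U :=
    (ENNReal.ofReal_tsum_of_nonneg (fun k => sq_nonneg _) hU).symm
  have hVeq : Ve = ENNReal.ofReal V :=
    (ENNReal.ofReal_tsum_of_nonneg (fun k => by positivity) hV).symm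
  -- step 1 : pointwise bound on each Fourier mode
  have step1 : ∀ k : ℤ, ENNReal.ofReal (|(k:ℝ)|^(2*s) * ‖B2 t u v k‖^2)
      ≤ (∑' k1 : ℤ, G k k1 * H k k1)^2 := by
    intro k
    have hb : ENNReal.ofReal ‖B2 t u v k‖ ≤ ∑' k1 : ℤ, ENNReal.ofReal
        ‖Complex.exp (Complex.I * (3 * (k : ℂ) * (k1 : ℂ) * ((k : ℂ) - (k1 : ℂ)) * (t : ℂ)))
          / ((k1 : ℂ) * ((k : ℂ) - (k1 : ℂ))) * u k1 * v (k - k1)‖ := ofReal_norm_tsum_le _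
    have hb2 : ENNReal.ofReal (|(k:ℝ)| ^ s) * ENNReal.ofReal ‖B2 t u v k‖
        ≤ ∑' k1 : ℤ, G k k1 * H k k1 := by
      calc ENNReal.ofReal (|(k:ℝ)| ^ s) * ENNReal.ofReal ‖B2 t u v k‖
          ≤ ENNReal.ofReal (|(k:ℝ)| ^ s) * ∑' k1 : ℤ, ENNReal.ofReal
            ‖Complex.exp (Complex.I * (3 * (k : ℂ) * (k1 : ℂ) * ((k : ℂ) - (k1 : ℂ)) * (t : ℂ)))
              / ((k1 : ℂ) * ((k : ℂ) - (k1 : ℂ))) * u k1 * v (k - k1)‖ :=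
            mul_le_mul_right hb _
        _ = ∑' k1 : ℤ, ENNReal.ofReal (|(k:ℝ)| ^ s) * ENNReal.ofReal
            ‖Complex.exp (Complex.I * (3 * (k : ℂ) * (k1 : ℂ) * ((k : ℂ) - (k1 : ℂ)) * (t : ℂ)))
              / ((k1 : ℂ) * ((k : ℂ) - (k1 : ℂ))) * u k1 * v (k - k1)‖ :=
            ENNReal.tsum_mul_left.symm
        _ = ∑' k1 : ℤ, G k k1 * H k k1 := by
            refine tsum_congr fun k1 => ?_
            rw [← ENNReal.ofReal_mul (by positivity), term_norm, step_pt s u v hv0 k k1,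
              hGdef, hHdef]
            rw [← ENNReal.ofReal_mul (by positivity)]
    calc ENNReal.ofReal (|(k:ℝ)|^(2*s) * ‖B2 t u v k‖^2)
        = (ENNReal.ofReal (|(k:ℝ)| ^ s) * ENNReal.ofReal ‖B2 t u v k‖)^2 := by
          rw [mul_pow, ← ENNReal.ofReal_pow (by positivity), ← ENNReal.ofReal_pow (norm_nonneg _),
            ← ENNReal.ofReal_mul (by positivity), rpow_sq' _ (abs_nonneg _)]
      _ ≤ (∑' k1 : ℤ, G k k1 * H k k1)^2 := pow_le_pow_left' hb2 2
  -- step 2 : Cauchy-Schwarz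
  have step2 : ∀ k : ℤ, (∑' k1 : ℤ, G k k1 * H k k1)^2 ≤ (∑' k1 : ℤ, (G k k1)^2) * Ve := by
    intro k
    refine le_trans (tsum_CS_sq (G k) (H k)) ?_
    have hH : (∑' k1 : ℤ, (H k k1)^2) = Ve := by
      have he : ∀ j : ℤ, ENNReal.ofReal (|(j:ℝ)| ^ s * ‖v j‖) ^ 2
          = ENNReal.ofReal (|(j:ℝ)|^(2*s) * ‖v j‖^2) := by
        intro j
        rw [← ENNReal.ofReal_pow (by positivity), mul_pow, rpow_sq' _ (abs_nonneg _)]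
      calc (∑' k1 : ℤ, (H k k1)^2)
          = ∑' k1 : ℤ, ENNReal.ofReal (|((k - k1 : ℤ):ℝ)|^(2*s) * ‖v (k - k1)‖^2) := by
            refine tsum_congr fun k1 => ?_
            rw [hHdef]
            exact he (k - k1)
        _ = Ve := by
            rw [hVedef]
            exact (Equiv.subLeft k).tsum_eq
              (fun j : ℤ => ENNReal.ofReal (|((j:ℤ):ℝ)|^(2*s) * ‖v j‖^2))
    rw [hH]
  -- step 3 : kernel bound
  have step3 : (∑' k : ℤ, ∑' k1 : ℤ, (G k k1)^2) ≤ ENNReal.ofReal M * Ue := by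
    rw [ENNReal.tsum_comm]
    have hinner : ∀ k1 : ℤ, (∑' k : ℤ, (G k k1)^2)
        ≤ ENNReal.ofReal M * ENNReal.ofReal (‖u k1‖^2) := by
      intro k1
      by_cases hk1 : k1 = 0
      · subst hk1
        rw [hu0]
        simp [hGdef, hu0]
      · have hsplit : ∀ k : ℤ, (G k k1)^2 = ENNReal.ofReal
            ((|(k:ℝ)| ^ s * |(k:ℝ) - (k1:ℝ)| ^ (-s) / (|(k1:ℝ)| * |(k:ℝ) - (k1:ℝ)|))^2)
            * ENNReal.ofReal (‖u k1‖^2) := by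
          intro k
          rw [hGdef, ← ENNReal.ofReal_pow (by positivity), mul_pow,
            ENNReal.ofReal_mul (by positivity)]
        calc (∑' k : ℤ, (G k k1)^2)
            = (∑' k : ℤ, ENNReal.ofReal
              ((|(k:ℝ)| ^ s * |(k:ℝ) - (k1:ℝ)| ^ (-s) / (|(k1:ℝ)| * |(k:ℝ) - (k1:ℝ)|))^2))
              * ENNReal.ofReal (‖u k1‖^2) := by
              rw [← ENNReal.tsum_mul_right]
              exact tsum_congr hsplit
          _ ≤ ENNReal.ofReal M * ENNReal.ofReal (‖u k1‖^2) := by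
              apply mul_le_mul_left
              calc (∑' k : ℤ, ENNReal.ofReal
                  ((|(k:ℝ)| ^ s * |(k:ℝ) - (k1:ℝ)| ^ (-s) / (|(k1:ℝ)| * |(k:ℝ) - (k1:ℝ)|))^2))
                  ≤ ∑' k : ℤ, ENNReal.ofReal (κ k) :=
                    ENNReal.tsum_le_tsum fun k =>
                      ENNReal.ofReal_le_ofReal (kernel_bound s hs1 hs2 k k1 hk1)
                _ = ENNReal.ofReal M := by
                    rw [hMdef]
                    exact (ENNReal.ofReal_tsum_of_nonneg hκnn hκsum).symm
    calc (∑' k1 : ℤ, ∑' k : ℤ, (G k k1)^2)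
        ≤ ∑' k1 : ℤ, ENNReal.ofReal M * ENNReal.ofReal (‖u k1‖^2) := ENNReal.tsum_le_tsum hinner
      _ = ENNReal.ofReal M * Ue := by rw [ENNReal.tsum_mul_left, hUedef]
  -- assemble
  have hmain : (∑' k : ℤ, ENNReal.ofReal (|(k:ℝ)|^(2*s) * ‖B2 t u v k‖^2))
      ≤ ENNReal.ofReal (M * U * V) := by
    calc (∑' k : ℤ, ENNReal.ofReal (|(k:ℝ)|^(2*s) * ‖B2 t u v k‖^2))
        ≤ ∑' k : ℤ, (∑' k1 : ℤ, (G k k1)^2) * Ve :=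
          ENNReal.tsum_le_tsum fun k => le_trans (step1 k) (step2 k)
      _ = (∑' k : ℤ, ∑' k1 : ℤ, (G k k1)^2) * Ve := ENNReal.tsum_mul_right
      _ ≤ (ENNReal.ofReal M * Ue) * Ve := mul_le_mul_left step3 _
      _ = ENNReal.ofReal (M * U * V) := by
          rw [hUeq, hVeq, ← ENNReal.ofReal_mul hM0, ← ENNReal.ofReal_mul (by positivity)]
  have hne : (∑' k : ℤ, ENNReal.ofReal (|(k:ℝ)|^(2*s) * ‖B2 t u v k‖^2)) ≠ ⊤ :=
    (lt_of_le_of_lt hmain ENNReal.ofReal_lt_top).ne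
  have htsum_le : (∑' k : ℤ, |(k:ℝ)|^(2*s) * ‖B2 t u v k‖^2) ≤ M * U * V := by
    have h1 := ENNReal.toReal_mono ENNReal.ofReal_ne_top hmain
    rw [ENNReal.tsum_toReal_eq (fun k => ENNReal.ofReal_ne_top)] at h1
    rw [ENNReal.toReal_ofReal (by positivity)] at h1
    calc (∑' k : ℤ, |(k:ℝ)|^(2*s) * ‖B2 t u v k‖^2)
        = ∑' k : ℤ, (ENNReal.ofReal (|(k:ℝ)|^(2*s) * ‖B2 t u v k‖^2)).toReal :=
          tsum_congr fun k => (ENNReal.toReal_ofReal (by positivity)).symm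
      _ ≤ M * U * V := h1
  have hB2sum_nonneg : 0 ≤ ∑' k : ℤ, |(k:ℝ)|^(2*s) * ‖B2 t u v k‖^2 :=
    tsum_nonneg fun k => by positivity
  have hfinal : hnorm s (B2 t u v) ≤ (M * U * V) ^ ((1:ℝ)/2) := by
    rw [hnorm]
    exact Real.rpow_le_rpow hB2sum_nonneg htsum_le (by norm_num)
  have hsplit : (M * U * V) ^ ((1:ℝ)/2) = M ^ ((1:ℝ)/2) * U ^ ((1:ℝ)/2) * V ^ ((1:ℝ)/2) := by
    rw [Real.mul_rpow (mul_nonneg hM0 hU0) hV0, Real.mul_rpow hM0 hU0]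
  have hu_norm : hnorm 0 u = U ^ ((1:ℝ)/2) := by
    rw [hnorm, hUdef]
    congr 1
    refine tsum_congr fun k => ?_
    norm_num
  have hv_norm : hnorm s v = V ^ ((1:ℝ)/2) := by rw [hnorm, hVdef]
  rw [hu_norm, hv_norm]
  calc hnorm s (B2 t u v) ≤ (M * U * V) ^ ((1:ℝ)/2) := hfinal
    _ = M ^ ((1:ℝ)/2) * U ^ ((1:ℝ)/2) * V ^ ((1:ℝ)/2) := hsplit
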